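/- Let (h_i, ẋ_i), i = 1,…,n, be data samples with h_i ∈ ℝ^{n_h}, ẋ_i ∈ ℝ^{n_x}, generated by a true system Δ_r ∈ ℝ^{n_x×n_h}: ẋ_i = Δ_r h_i + w_i with w_i⊤ w_i < δ for all i. Let Ξ := Σ_{i=1}^{n−1} λ'_i ξ(h_i, ẋ_i) for some λ'_1,…,λ'_{n−1} ≥ 0. Suppose λ_1,…,λ_n ≥ 0 and σ⁺ ≥ 0 satisfy Ξ − Σ_{i=1}^{n} λ_i ξ(h_i, ẋ_i) ⪰ σ⁺ · diag(I_{n_x}, 0_{n_h}), and suppose there exists α ≥ 0 with ξ(h_n, ẋ_n) − α Ξ ⪰ 0. Then there exist μ_1,…,μ_{n−1} ≥ 0 and σ ≥ σ⁺ such that Ξ − Σ_{i=1}^{n−1} μ_i ξ(h_i, ẋ_i) ⪰ σ · diag(I_{n_x}, 0_{n_h}). (Thus a data sample for which the learning criterion holds can be discarded without decreasing the achievable value of σ.) -/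

import Mathlib

open Matrix

/-- The data-sample matrix
`ξ(h, ẋ) := [[δ I_{n_x} − ẋẋᵀ, ẋhᵀ],[hẋᵀ, −hhᵀ]]`. -/
noncomputable def xiMat (n_x n_h : ℕ) (δ : ℝ) (h : Fin n_h → ℝ) (xd : Fin n_x → ℝ) :
    Matrix (Fin n_x ⊕ Fin n_h) (Fin n_x ⊕ Fin n_h) ℝ :=
  Matrix.fromBlocks (δ • 1 - vecMulVec xd xd) (vecMulVec xd h)
    (vecMulVec h xd) (-(vecMulVec h h))

/-- Data samples `(hᵢ, ẋᵢ)`, `i = 0,…,n` (so `n+1` samples, the paper's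
`i = 1,…,n` with `n ≥ 1`), are generated by a true system `Δ_r` with disturbances bounded
by `δ`. Let `Ξ := Σ_{i<n} λ'ᵢ ξ(hᵢ, ẋᵢ)` (the first `n` samples) with `λ'ᵢ ≥ 0`.
If `λᵢ ≥ 0` and `σ⁺ ≥ 0` satisfy `Ξ − Σᵢ λᵢ ξ(hᵢ, ẋᵢ) ⪰ σ⁺ diag(I, 0)` (sum over all
`n+1` samples), and there is `α ≥ 0` with `ξ(h_last, ẋ_last) − αΞ ⪰ 0`, then there exist
`μᵢ ≥ 0` (over the first `n` samples) and `σ ≥ σ⁺` with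
`Ξ − Σᵢ μᵢ ξ(hᵢ, ẋᵢ) ⪰ σ diag(I, 0)`. -/
lemma psd_smul {m : Type*} [Fintype m] {M : Matrix m m ℝ} (hM : M.PosSemidef)
    {c : ℝ} (hc : 0 ≤ c) : (c • M).PosSemidef := by
  refine ⟨?_, fun x => ?_⟩
  · rw [Matrix.IsHermitian, conjTranspose_smul, star_trivial, hM.1.eq]
  exact (hM.smul hc).2 x

theorem stmt4 (n_x n_u n : ℕ) (hx : 0 < n_x) (hu : 0 < n_u)
    (δ : ℝ) (hδ : 0 < δ)
    (h : Fin (n + 1) → Fin (n_x + n_u) → ℝ) (xd : Fin (n + 1) → Fin n_x → ℝ)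
    (Δr : Matrix (Fin n_x) (Fin (n_x + n_u)) ℝ)
    (w : Fin (n + 1) → Fin n_x → ℝ)
    (hgen : ∀ i, xd i = Δr.mulVec (h i) + w i)
    (hw : ∀ i, w i ⬝ᵥ w i < δ)
    (l' : Fin n → ℝ) (hl' : ∀ i, 0 ≤ l' i)
    (Ξ : Matrix (Fin n_x ⊕ Fin (n_x + n_u)) (Fin n_x ⊕ Fin (n_x + n_u)) ℝ)
    (hΞ : Ξ = ∑ i : Fin n, l' i • xiMat n_x (n_x + n_u) δ (h i.castSucc) (xd i.castSucc))
    (l : Fin (n + 1) → ℝ) (hl : ∀ i, 0 ≤ l i)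
    (σp : ℝ) (hσp : 0 ≤ σp)
    (hconstr : (Ξ - (∑ i : Fin (n + 1), l i • xiMat n_x (n_x + n_u) δ (h i) (xd i)) -
        σp • Matrix.fromBlocks 1 0 0 0).PosSemidef)
    (α : ℝ) (hα : 0 ≤ α)
    (hcrit : (xiMat n_x (n_x + n_u) δ (h (Fin.last n)) (xd (Fin.last n)) -
        α • Ξ).PosSemidef) :
    ∃ (μ : Fin n → ℝ) (σ : ℝ), (∀ i, 0 ≤ μ i) ∧ σp ≤ σ ∧
      (Ξ - (∑ i : Fin n, μ i • xiMat n_x (n_x + n_u) δ (h i.castSucc) (xd i.castSucc)) -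
        σ • Matrix.fromBlocks 1 0 0 0).PosSemidef := by
  refine ⟨fun i => l i.castSucc + l (Fin.last n) * α * l' i, σp,
    fun i => add_nonneg (hl _) (mul_nonneg (mul_nonneg (hl _) hα) (hl' i)), le_refl _, ?_⟩
  have key : Ξ - (∑ i : Fin n,
      (l i.castSucc + l (Fin.last n) * α * l' i) •
        xiMat n_x (n_x + n_u) δ (h i.castSucc) (xd i.castSucc)) -
      σp • Matrix.fromBlocks 1 0 0 0 =
      (Ξ - (∑ i : Fin (n + 1), l i • xiMat n_x (n_x + n_u) δ (h i) (xd i)) -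
        σp • Matrix.fromBlocks 1 0 0 0) +
      l (Fin.last n) • (xiMat n_x (n_x + n_u) δ (h (Fin.last n)) (xd (Fin.last n)) -
        α • Ξ) := by
    rw [Fin.sum_univ_castSucc]
    rw [hΞ]
    simp only [smul_sub, Finset.smul_sum, smul_smul, add_smul, Finset.sum_add_distrib,
      mul_assoc]
    abel
  rw [key]
  exact hconstr.add (psd_smul hcrit (hl _))
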